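/- arXiv:1610.09107 — 5 statements merged into one kernel-verified Lean document; each statement's English description precedes it below -/
import Mathlib

section
/- Let K be a field of characteristic zero equipped with a multiplicative ultrametric norm for which K is complete, let p be a prime number with ‖(p : K)‖ < 1, and let q = p^o for some integer o ≥ 1. Let δ ≥ 1 and M ≥ 0 be integers, and let (c_{n,m})_{n ∈ ℕ, 0 ≤ m ≤ M} be a family of elements of K such that ∑_{n ∈ ℕ} ∑_{m=0}^{M} ‖c_{n,m}‖ · ‖(q : K)‖^n < ∞. If for every natural number a ≥ δ the (convergent) sum ∑_{n ∈ ℕ} ∑_{m=0}^{M} c_{n,m} · (q : K)^{a n} · (a : K)^m equals 0, then c_{n,m} = 0 for all n ∈ ℕ and all 0 ≤ m ≤ M. -/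
open Finset

lemma aux_poly_zero {K : Type*} [NormedField K] [CharZero K] :
    ∀ (M : ℕ) (b : ℕ → K) (C r : ℝ), 0 ≤ C → 0 ≤ r → r < 1 → ∀ (δ : ℕ),
    (∀ a : ℕ, δ ≤ a → ‖∑ m ∈ Finset.range (M + 1), b m * (a : K) ^ m‖ ≤ C * r ^ a) →
    ∀ m ≤ M, b m = 0 := by
  intro M
  induction M with
  | zero =>
    intro b C r hC hr0 hr1 δ h m hm
    interval_cases m
    have hb : ∀ a : ℕ, δ ≤ a → ‖b 0‖ ≤ C * r ^ a := by
      intro a ha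
      simpa using h a ha
    have htend : Filter.Tendsto (fun a : ℕ => C * r ^ a) Filter.atTop (nhds 0) := by
      simpa using (tendsto_pow_atTop_nhds_zero_of_lt_one hr0 hr1).const_mul C
    have : ‖b 0‖ ≤ 0 := ge_of_tendsto htend (Filter.eventually_atTop.2 ⟨δ, hb⟩)
    simpa using le_antisymm this (norm_nonneg _)
  | succ M ih =>
    intro b C r hC hr0 hr1 δ h
    set b' : ℕ → K := fun j => ∑ m ∈ Finset.range (M + 2),
      if j < m then (m.choose j : K) * b m else 0 with hb'
    -- key identity
    have key : ∀ x : K, ∑ j ∈ Finset.range (M + 1), b' j * x ^ j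
        = (∑ m ∈ Finset.range (M + 2), b m * (x + 1) ^ m)
          - ∑ m ∈ Finset.range (M + 2), b m * x ^ m := by
      intro x
      have htop : b' (M + 1) * x ^ (M + 1) = 0 := by
        have : b' (M + 1) = 0 := by
          rw [hb']
          refine Finset.sum_eq_zero fun m hm => ?_
          have : ¬ (M + 1 < m) := by
            have := Finset.mem_range.1 hm; omega
          simp [this]
        rw [this, zero_mul]
      have step1 : ∑ j ∈ Finset.range (M + 1), b' j * x ^ j
          = ∑ j ∈ Finset.range (M + 2), b' j * x ^ j := by
        conv_rhs => rw [Finset.sum_range_succ]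
        rw [htop, add_zero]
      rw [step1]
      have step2 : ∑ j ∈ Finset.range (M + 2), b' j * x ^ j
          = ∑ j ∈ Finset.range (M + 2), ∑ m ∈ Finset.range (M + 2),
              (if j < m then (m.choose j : K) * b m * x ^ j else 0) := by
        refine Finset.sum_congr rfl fun j _ => ?_
        rw [hb', Finset.sum_mul]
        refine Finset.sum_congr rfl fun m _ => ?_
        split <;> simp
      rw [step2, Finset.sum_comm, ← Finset.sum_sub_distrib]
      refine Finset.sum_congr rfl fun m hm => ?_
      -- per-m identity
      have hsub : Finset.range m ⊆ Finset.range (M + 2) := by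
        refine Finset.range_subset_range.2 ?_
        have := Finset.mem_range.1 hm; omega
      have restrict : ∑ j ∈ Finset.range (M + 2),
            (if j < m then (m.choose j : K) * b m * x ^ j else 0)
          = ∑ j ∈ Finset.range m, (m.choose j : K) * b m * x ^ j := by
        rw [← Finset.sum_subset hsub]
        · refine Finset.sum_congr rfl fun j hj => ?_
          have : j < m := Finset.mem_range.1 hj
          simp [this]
        · intro j _ hj2
          have : ¬ j < m := by simpa using hj2
          simp [this]
      rw [restrict]
      have hxp : (x + 1) ^ m = ∑ j ∈ Finset.range (m + 1), x ^ j * (m.choose j : K) := by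
        rw [add_pow]
        simp
      rw [hxp, Finset.sum_range_succ]
      simp only [Nat.choose_self, Nat.cast_one, mul_one, mul_add, Finset.mul_sum]
      rw [add_sub_cancel_right]
      refine Finset.sum_congr rfl fun j _ => by ring
    -- bound for the difference polynomial
    have hdiff : ∀ a : ℕ, δ ≤ a →
        ‖∑ j ∈ Finset.range (M + 1), b' j * (a : K) ^ j‖ ≤ (2 * C) * r ^ a := by
      intro a ha
      have h1 := h a ha
      have h2 := h (a + 1) (le_trans ha (Nat.le_succ a))
      have cast1 : ((a + 1 : ℕ) : K) = (a : K) + 1 := by push_cast; ring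
      rw [key]
      have := norm_sub_le (∑ m ∈ Finset.range (M + 2), b m * ((a : K) + 1) ^ m)
        (∑ m ∈ Finset.range (M + 2), b m * (a : K) ^ m)
      refine le_trans this ?_
      have hA : ‖∑ m ∈ Finset.range (M + 2), b m * ((a : K) + 1) ^ m‖ ≤ C * r ^ a := by
        have := h2
        rw [cast1] at this
        refine le_trans this ?_
        have : r ^ (a + 1) ≤ r ^ a := pow_le_pow_of_le_one hr0 hr1.le (Nat.le_succ a)
        nlinarith
      nlinarith [h1]
    -- apply IH to b'
    have hb'zero : ∀ j ≤ M, b' j = 0 :=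
      ih b' (2 * C) r (by linarith) hr0 hr1 δ hdiff
    -- deduce b (M+1) = 0
    have htop0 : b (M + 1) = 0 := by
      have hM := hb'zero M le_rfl
      rw [hb'] at hM
      simp only at hM
      have heq : ∑ m ∈ Finset.range (M + 2), (if M < m then ((m.choose M : K)) * b m else 0)
          = ((M + 1).choose M : K) * b (M + 1) := by
        rw [Finset.sum_congr rfl (fun m hm => ?_)]
        · exact (Finset.sum_ite_eq' (Finset.range (M + 2)) (M + 1)
            (fun m => (m.choose M : K) * b m)).trans (by simp)
        · have hmlt := Finset.mem_range.1 hm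
          have : M < m ↔ m = M + 1 := by omega
          simp only [this]
      rw [heq] at hM
      have hch : ((M + 1).choose M : K) ≠ 0 := by
        rw [Nat.choose_succ_self_right]
        exact Nat.cast_ne_zero.2 (by omega)
      exact (mul_eq_zero.1 hM).resolve_left hch
    -- now reduce to degree M and apply IH to b
    have hred : ∀ a : ℕ, δ ≤ a →
        ‖∑ m ∈ Finset.range (M + 1), b m * (a : K) ^ m‖ ≤ C * r ^ a := by
      intro a ha
      have := h a ha
      rwa [Finset.sum_range_succ, htop0, zero_mul, add_zero] at this
    have hlow : ∀ m ≤ M, b m = 0 := ih b C r hC hr0 hr1 δ hred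
    intro m hm
    rcases Nat.lt_or_ge m (M + 1) with h1 | h1
    · exact hlow m (Nat.lt_succ_iff.1 h1)
    · have hme : m = M + 1 := by omega
      rw [hme]; exact htop0


/-- **Uniqueness of coefficients** (Proposition 4.1 of the paper): if a function
`a ↦ ∑_{n,m} c_{n,m} (q^a)^n a^m` (with `q = p^o`, `‖p‖ < 1`, coefficients summable)
vanishes for all natural numbers `a ≥ δ`, then all coefficients `c_{n,m}` vanish. -/
theorem stmt_0 {K : Type*} [NormedField K] [CharZero K] [IsUltrametricDist K]
    [CompleteSpace K] (p : ℕ) (hp : p.Prime) (hpK : ‖(p : K)‖ < 1)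
    (o : ℕ) (ho : 1 ≤ o) (q : ℕ) (hq : q = p ^ o)
    (δ M : ℕ) (hδ : 1 ≤ δ) (c : ℕ → ℕ → K)
    (hsum : Summable fun n : ℕ => ∑ m ∈ Finset.range (M + 1), ‖c n m‖ * ‖(q : K)‖ ^ n)
    (hzero : ∀ a : ℕ, δ ≤ a →
      (∑' n : ℕ, ∑ m ∈ Finset.range (M + 1),
        c n m * (q : K) ^ (a * n) * (a : K) ^ m) = 0) :
    ∀ n : ℕ, ∀ m ≤ M, c n m = 0 := by
  have hq0 : (q : K) ≠ 0 := by
    have : q ≠ 0 := by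
      rw [hq]; exact pow_ne_zero o hp.ne_zero
    exact Nat.cast_ne_zero.2 this
  set r : ℝ := ‖(q : K)‖ with hrdef
  have hr0 : 0 < r := norm_pos_iff.2 hq0
  have hr1 : r < 1 := by
    rw [hrdef, hq]
    push_cast
    rw [norm_pow]
    calc ‖(p : K)‖ ^ o ≤ ‖(p : K)‖ ^ 1 :=
          pow_le_pow_of_le_one (norm_nonneg _) hpK.le ho
      _ = ‖(p : K)‖ := pow_one _
      _ < 1 := hpK
  set g : ℕ → ℝ := fun n => ∑ m ∈ Finset.range (M + 1), ‖c n m‖ * r ^ n with hgdef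
  have hg0 : ∀ n, 0 ≤ g n := fun n =>
    Finset.sum_nonneg fun m _ => mul_nonneg (norm_nonneg _) (pow_nonneg hr0.le _)
  have hgsum : Summable g := hsum
  intro n
  induction n using Nat.strong_induction_on with
  | _ N ih =>
  have hgtail : Summable fun i => g (i + (N + 1)) := (summable_nat_add_iff (N + 1)).2 hgsum
  set C : ℝ := ∑' i, g (i + (N + 1)) with hCdef
  have hC0 : 0 ≤ C := tsum_nonneg fun i => hg0 _
  have hP : ∀ a : ℕ, δ ≤ a →
      ‖∑ m ∈ Finset.range (M + 1), c N m * (a : K) ^ m‖ ≤ (C / r ^ (N + 1)) * r ^ a := by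
    intro a ha
    obtain ⟨b, rfl⟩ : ∃ b, a = b + 1 := ⟨a - 1, by omega⟩
    set a := b + 1 with hadef
    set t : ℕ → K := fun n =>
      ∑ m ∈ Finset.range (M + 1), c n m * (q : K) ^ (a * n) * (a : K) ^ m with htdef
    have hnat1 : ‖(a : K)‖ ≤ 1 := IsUltrametricDist.norm_natCast_le_one K a
    have ht : ∀ n, ‖t n‖ ≤ g n * r ^ (b * n) := by
      intro n
      rw [htdef]
      refine le_trans (norm_sum_le _ _) ?_
      rw [hgdef]
      simp only [Finset.sum_mul]
      refine Finset.sum_le_sum fun m _ => ?_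
      rw [norm_mul, norm_mul, norm_pow, norm_pow, ← hrdef]
      have h1 : ‖(a : K)‖ ^ m ≤ 1 := pow_le_one₀ (norm_nonneg _) hnat1
      have h2 : r ^ (a * n) = r ^ n * r ^ (b * n) := by
        rw [← pow_add]; congr 1; rw [hadef]; ring
      calc ‖c n m‖ * r ^ (a * n) * ‖(a : K)‖ ^ m
          ≤ ‖c n m‖ * r ^ (a * n) * 1 :=
            mul_le_mul_of_nonneg_left h1
              (mul_nonneg (norm_nonneg _) (pow_nonneg hr0.le _))
        _ = ‖c n m‖ * r ^ n * r ^ (b * n) := by rw [mul_one, h2, mul_assoc]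
    have ht1 : ∀ n, ‖t n‖ ≤ g n := fun n =>
      le_trans (ht n) (mul_le_of_le_one_right (hg0 n)
        (pow_le_one₀ hr0.le hr1.le))
    have hts : Summable t := Summable.of_norm_bounded hgsum ht1
    have h0 : ∑' n, t n = 0 := hzero a ha
    have hlow : ∀ k, k < N → t k = 0 := by
      intro k hk
      rw [htdef]
      exact Finset.sum_eq_zero fun m hm => by
        rw [ih k hk m (Nat.lt_succ_iff.1 (Finset.mem_range.1 hm)), zero_mul, zero_mul]
    have htail0 : ∑' i, t (i + N) = 0 := by
      have hsplit := Summable.sum_add_tsum_nat_add (f := t) N hts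
      rw [Finset.sum_eq_zero (fun i hi => hlow i (Finset.mem_range.1 hi)), zero_add] at hsplit
      rw [hsplit, h0]
    have hshift : Summable fun i => t (i + 1 + N) := by
      have := (summable_nat_add_iff (N + 1)).2 hts
      refine this.congr fun i => ?_
      congr 1; omega
    have hTN : t N = - ∑' i, t (i + 1 + N) := by
      have hts' : Summable fun i => t (i + N) := (summable_nat_add_iff N).2 hts
      have := Summable.tsum_eq_zero_add hts'
      rw [htail0, zero_add] at this
      exact eq_neg_of_add_eq_zero_left this.symm
    have htnormsum : Summable fun i => ‖t (i + 1 + N)‖ := by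
      have : Summable fun n => ‖t n‖ :=
        Summable.of_nonneg_of_le (fun n => norm_nonneg _) ht1 hgsum
      have h2 := (summable_nat_add_iff (N + 1)).2 this
      refine h2.congr fun i => ?_
      congr 2; omega
    have hbound : ‖t N‖ ≤ C * r ^ (b * (N + 1)) := by
      rw [hTN, norm_neg]
      refine le_trans (norm_tsum_le_tsum_norm htnormsum) ?_
      have step : ∀ i, ‖t (i + 1 + N)‖ ≤ g (i + (N + 1)) * r ^ (b * (N + 1)) := by
        intro i
        have e : i + 1 + N = i + (N + 1) := by omega
        rw [e]
        refine le_trans (ht _) ?_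
        refine mul_le_mul_of_nonneg_left ?_ (hg0 _)
        exact pow_le_pow_of_le_one hr0.le hr1.le (by nlinarith [Nat.zero_le i])
      refine le_trans (Summable.tsum_le_tsum step htnormsum ?_) ?_
      · exact hgtail.mul_right _
      · rw [tsum_mul_right]
    -- factor out q^(aN)
    have hfac : t N = (q : K) ^ (a * N) * ∑ m ∈ Finset.range (M + 1), c N m * (a : K) ^ m := by
      rw [htdef, Finset.mul_sum]
      exact Finset.sum_congr rfl fun m _ => by ring
    rw [hfac, norm_mul, norm_pow, ← hrdef] at hbound
    have hpow : 0 < r ^ (a * N) := pow_pos hr0 _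
    rw [mul_comm] at hbound
    have hdiv : ‖∑ m ∈ Finset.range (M + 1), c N m * (a : K) ^ m‖
        ≤ C * r ^ (b * (N + 1)) / r ^ (a * N) := (le_div_iff₀ hpow).2 hbound
    refine le_trans hdiv (le_of_eq ?_)
    rw [hadef]
    rw [show b * (N + 1) = b * N + b from by ring, show (b + 1) * N = b * N + N from by ring,
      pow_add, pow_add]
    field_simp
    ring
  exact aux_poly_zero M (c N) (C / r ^ (N + 1)) r
    (div_nonneg hC0 (pow_nonneg hr0.le _)) hr0.le hr1 δ hP
end

section
/- Let K be a field equipped with a multiplicative ultrametric norm for which K is complete, let p be a prime number with ‖(p : K)‖ < 1, and let q = p^o for some integer o ≥ 1. Let M ≥ 0 be an integer and let (c_{n,m})_{n ∈ ℕ, 0 ≤ m ≤ M} be a family of elements of K with ∑_{n ∈ ℕ} ∑_{m=0}^{M} ‖c_{n,m}‖ · ‖(q : K)‖^n < ∞. Then for every fixed natural number a₀, the sequence u ↦ ∑_{n ∈ ℕ} ∑_{m=0}^{M} c_{n,m} · (q : K)^{(a₀ + p^u) n} · ((a₀ + p^u : ℕ) : K)^m converges in K, as u → ∞, to ∑_{m=0}^{M}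 c_{0,m} · (a₀ : K)^m. -/
/-- Extracting the constant term: taking `a = a₀ + p^u` and letting `u → ∞`, the value of
the series `∑_{n,m} c_{n,m} (q^a)^n a^m` converges to `∑_m c_{0,m} a₀^m`. -/
theorem stmt_1 {K : Type*} [NormedField K] [IsUltrametricDist K] [CompleteSpace K]
    (p : ℕ) (hp : p.Prime) (hpK : ‖(p : K)‖ < 1)
    (o : ℕ) (ho : 1 ≤ o) (q : ℕ) (hq : q = p ^ o)
    (M : ℕ) (c : ℕ → ℕ → K)
    (hsum : Summable fun n : ℕ => ∑ m ∈ Finset.range (M + 1), ‖c n m‖ * ‖(q : K)‖ ^ n)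
    (a₀ : ℕ) :
    Filter.Tendsto
      (fun u : ℕ => ∑' n : ℕ, ∑ m ∈ Finset.range (M + 1),
        c n m * (q : K) ^ ((a₀ + p ^ u) * n) * ((a₀ + p ^ u : ℕ) : K) ^ m)
      Filter.atTop
      (nhds (∑ m ∈ Finset.range (M + 1), c 0 m * (a₀ : K) ^ m)) := by
  classical
  set r : ℝ := ‖(q : K)‖ with hr
  have hr0 : 0 ≤ r := norm_nonneg _
  have hr1 : r < 1 := by
    rw [hr, hq]
    push_cast
    rw [norm_pow]
    exact pow_lt_one₀ (norm_nonneg _) hpK (by omega)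
  set B : ℝ := max ‖(a₀ : K)‖ 1 with hB
  have hB1 : (1 : ℝ) ≤ B := le_max_right _ _
  have hB0 : (0 : ℝ) ≤ B := le_trans zero_le_one hB1
  have hBa : ∀ u : ℕ, ‖((a₀ + p ^ u : ℕ) : K)‖ ≤ B := by
    intro u
    push_cast
    refine (IsUltrametricDist.norm_add_le_max _ _).trans (max_le (le_max_left _ _) ?_)
    rw [norm_pow]
    exact le_trans (pow_le_one₀ (norm_nonneg _) hpK.le) hB1
  -- the pointwise limit
  set G : ℕ → K := fun n =>
    if n = 0 then ∑ m ∈ Finset.range (M + 1), c 0 m * (a₀ : K) ^ m else 0 with hG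
  have hGsum : ∑' n : ℕ, G n = ∑ m ∈ Finset.range (M + 1), c 0 m * (a₀ : K) ^ m := by
    rw [tsum_eq_single 0]
    · simp [hG]
    · intro n hn; simp [hG, hn]
  rw [← hGsum]
  -- convergence of the base `a₀ + p^u → a₀` in `K`
  have hA : Filter.Tendsto (fun u : ℕ => ((a₀ + p ^ u : ℕ) : K)) Filter.atTop
      (nhds ((a₀ : K))) := by
    have h0 : Filter.Tendsto (fun u : ℕ => (p : K) ^ u) Filter.atTop (nhds 0) :=
      tendsto_pow_atTop_nhds_zero_of_norm_lt_one hpK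
    have := (tendsto_const_nhds (x := (a₀ : K)) (f := Filter.atTop)).add h0
    rw [add_zero] at this
    refine this.congr fun u => ?_
    push_cast; ring
  refine tendsto_tsum_of_dominated_convergence
    (bound := fun n => (∑ m ∈ Finset.range (M + 1), ‖c n m‖ * r ^ n) * B ^ M)
    (hsum.mul_right _) ?_ ?_
  · intro n
    rcases eq_or_ne n 0 with rfl | hn
    · simp only [hG, if_pos rfl, mul_zero, pow_zero, mul_one]
      exact tendsto_finset_sum _ fun m _ => (hA.pow m).const_mul _
    · simp only [hG, if_neg hn]
      have hb : ∀ u : ℕ, ‖∑ m ∈ Finset.range (M + 1),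
          c n m * (q : K) ^ ((a₀ + p ^ u) * n) * ((a₀ + p ^ u : ℕ) : K) ^ m‖
          ≤ (∑ m ∈ Finset.range (M + 1), ‖c n m‖ * B ^ M) * r ^ u := by
        intro u
        rw [Finset.sum_mul]
        refine (norm_sum_le _ _).trans (Finset.sum_le_sum fun m hm => ?_)
        rw [norm_mul, norm_mul, norm_pow, norm_pow]
        have h1 : r ^ ((a₀ + p ^ u) * n) ≤ r ^ u := by
          refine pow_le_pow_of_le_one hr0 hr1.le ?_
          have : u < p ^ u := Nat.lt_pow_self hp.one_lt
          have hn1 : 1 ≤ n := Nat.one_le_iff_ne_zero.mpr hn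
          calc u ≤ a₀ + p ^ u := by omega
            _ ≤ (a₀ + p ^ u) * n := Nat.le_mul_of_pos_right _ hn1
        have h2 : ‖((a₀ + p ^ u : ℕ) : K)‖ ^ m ≤ B ^ M :=
          le_trans (pow_le_pow_left₀ (norm_nonneg _) (hBa u) m)
            (pow_le_pow_right₀ hB1 (by simpa using Nat.lt_succ_iff.mp (Finset.mem_range.mp hm)))
        calc ‖c n m‖ * r ^ ((a₀ + p ^ u) * n) * ‖((a₀ + p ^ u : ℕ) : K)‖ ^ m
            ≤ ‖c n m‖ * r ^ u * B ^ M := by gcongr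
          _ = ‖c n m‖ * B ^ M * r ^ u := by ring
      have hlim : Filter.Tendsto
          (fun u : ℕ => (∑ m ∈ Finset.range (M + 1), ‖c n m‖ * B ^ M) * r ^ u)
          Filter.atTop (nhds 0) := by
        have := (tendsto_pow_atTop_nhds_zero_of_lt_one hr0 hr1).const_mul
          (∑ m ∈ Finset.range (M + 1), ‖c n m‖ * B ^ M)
        simpa using this
      exact squeeze_zero_norm hb hlim
  · filter_upwards with u n
    rw [Finset.sum_mul]
    refine (norm_sum_le _ _).trans (Finset.sum_le_sum fun m hm => ?_)
    rw [norm_mul, norm_mul, norm_pow, norm_pow]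
    have h1 : r ^ ((a₀ + p ^ u) * n) ≤ r ^ n := by
      refine pow_le_pow_of_le_one hr0 hr1.le ?_
      have hp1 : 1 ≤ p ^ u := Nat.one_le_pow _ _ hp.pos
      calc n = 1 * n := (one_mul n).symm
        _ ≤ (a₀ + p ^ u) * n := Nat.mul_le_mul_right n (by omega)
    have h2 : ‖((a₀ + p ^ u : ℕ) : K)‖ ^ m ≤ B ^ M :=
      le_trans (pow_le_pow_left₀ (norm_nonneg _) (hBa u) m)
        (pow_le_pow_right₀ hB1 (by simpa using Nat.lt_succ_iff.mp (Finset.mem_range.mp hm)))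
    calc ‖c n m‖ * r ^ ((a₀ + p ^ u) * n) * ‖((a₀ + p ^ u : ℕ) : K)‖ ^ m
        ≤ ‖c n m‖ * r ^ n * B ^ M := by gcongr
      _ = ‖c n m‖ * r ^ n * B ^ M := rfl
end

section
/- Let K be a field and let λ ∈ K be a nonzero element that is not a root of unity (i.e. λ^c ≠ 1 for every integer c ≥ 1). Let δ ≥ 1 and L ≥ 0 be integers, let C_1, …, C_δ be positive integers, and let P_1, …, P_δ be polynomials with coefficients in K. Then there exists a polynomial Q in two variables with coefficients in K such that for every natural number a with a ≥ L one has ∑_{L ≤ I_1 < I_2 < ⋯ < I_δ ≤ a−1} ∏_{j=1}^{δ} P_j((I_j : K)) · λ^{C_j I_j} = Q((a : K), λ^a), where the sum ranges over all strictly increasing δ-tuples of integers I_1, …, I_δ lying between L and a−1 (the sum being 0 when there are no such tuples). -/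
open Polynomial in
/-- Discrete antiderivative: for `μ ≠ 1` and any polynomial `p`, there is `q` with
`μ * q(x+1) - q(x) = p(x)` for all `x`. -/
theorem my_exists_antideriv {K : Type*} [Field K] (μ : K) (hμ : μ ≠ 1) :
    ∀ n (p : Polynomial K), p.natDegree ≤ n →
      ∃ q : Polynomial K, ∀ x : K, μ * q.eval (x + 1) - q.eval x = p.eval x := by
  have hμ0 : μ - 1 ≠ 0 := sub_ne_zero.2 hμ
  intro n
  induction n with
  | zero =>
    intro p hp
    refine ⟨Polynomial.C (p.coeff 0 / (μ - 1)), fun x => ?_⟩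
    rw [Polynomial.eq_C_of_natDegree_le_zero hp]
    simp only [Polynomial.eval_C]
    field_simp
    ring
    simp
  | succ n ih =>
    intro p hp
    set c : K := p.coeff (n + 1) / (μ - 1) with hc
    set q₀ : Polynomial K := Polynomial.C c * Polynomial.X ^ (n + 1) with hq₀
    set Φ : Polynomial K := Polynomial.C μ * q₀.comp (Polynomial.X + 1) - q₀ with hΦ
    have hΦdeg : Φ.natDegree ≤ n + 1 := by
      refine le_trans (Polynomial.natDegree_sub_le _ _) ?_
      simp only [max_le_iff]
      constructor
      · refine le_trans (Polynomial.natDegree_mul_le) ?_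
        simp only [Polynomial.natDegree_C, zero_add]
        refine le_trans (Polynomial.natDegree_comp_le) ?_
        have : (Polynomial.X + 1 : Polynomial K).natDegree ≤ 1 := by
          refine le_trans (Polynomial.natDegree_add_le _ _) ?_
          simp
        calc q₀.natDegree * (Polynomial.X + 1 : Polynomial K).natDegree
            ≤ q₀.natDegree * 1 := Nat.mul_le_mul_left _ this
          _ ≤ n + 1 := by
              rw [mul_one, hq₀]
              exact le_trans (Polynomial.natDegree_mul_le) (by simp)
      · rw [hq₀]; exact le_trans (Polynomial.natDegree_mul_le) (by simp)
    have hΦcoeff : Φ.coeff (n + 1) = p.coeff (n + 1) := by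
      have hcomp : q₀.comp (Polynomial.X + 1) = Polynomial.C c * (Polynomial.X + 1) ^ (n + 1) := by
        rw [hq₀]; simp [Polynomial.pow_comp]
      have hmonic : ((Polynomial.X + 1 : Polynomial K) ^ (n + 1)).coeff (n + 1) = 1 := by
        have h1 : (Polynomial.X + 1 : Polynomial K) = Polynomial.X + Polynomial.C 1 := by simp
        have := (Polynomial.monic_X_add_C (1 : K)).pow (n + 1)
        have hdeg : ((Polynomial.X + Polynomial.C 1 : Polynomial K) ^ (n+1)).natDegree = n + 1 := by
          rw [Polynomial.natDegree_pow, Polynomial.natDegree_X_add_C, mul_one]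
        rw [h1]
        have := this.coeff_natDegree
        rwa [hdeg] at this
      rw [hΦ, Polynomial.coeff_sub, hcomp, ← mul_assoc, ← Polynomial.C_mul,
        Polynomial.coeff_C_mul, hmonic, hq₀, Polynomial.coeff_C_mul,
        Polynomial.coeff_X_pow, if_pos rfl, mul_one, mul_one, hc]
      field_simp
    have hr : (p - Φ).natDegree ≤ n := by
      rw [Polynomial.natDegree_le_iff_coeff_eq_zero]
      intro m hm
      rcases Nat.lt_or_ge (n + 1) m with h | h
      · rw [Polynomial.coeff_sub, Polynomial.coeff_eq_zero_of_natDegree_lt (lt_of_le_of_lt hp h),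
          Polynomial.coeff_eq_zero_of_natDegree_lt (lt_of_le_of_lt hΦdeg h), sub_zero]
      · have hm1 : m = n + 1 := le_antisymm h hm
        rw [hm1, Polynomial.coeff_sub, hΦcoeff, sub_self]
    obtain ⟨q₁, hq₁⟩ := ih (p - Φ) hr
    refine ⟨q₀ + q₁, fun x => ?_⟩
    have h0 : Φ.eval x = μ * q₀.eval (x + 1) - q₀.eval x := by
      rw [hΦ]; simp [Polynomial.eval_comp]
    have := hq₁ x
    rw [Polynomial.eval_sub] at this
    simp only [Polynomial.eval_add]
    linear_combination this - h0


/-- Key lemma: geometric-polynomial sums are polynomial in `(a, l^a)`. -/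
theorem my_key_sum {K : Type*} [Field K] (l : K) (hl : ∀ c : ℕ, 1 ≤ c → l ^ c ≠ 1)
    (L : ℕ) (p : Polynomial K) (c : ℕ) (hc : 1 ≤ c) :
    ∃ Q : MvPolynomial (Fin 2) K, ∀ a : ℕ, L ≤ a →
      (∑ b ∈ Finset.Ico L a, p.eval (b : K) * l ^ (c * b)) = MvPolynomial.eval ![(a : K), l ^ a] Q := by
  obtain ⟨q, hq⟩ := my_exists_antideriv (l ^ c) (hl c hc) p.natDegree p le_rfl
  -- F b = l^(c*b) * q.eval b  telescopes
  have tel : ∀ a : ℕ, L ≤ a →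
      (∑ b ∈ Finset.Ico L a, p.eval (b : K) * l ^ (c * b))
        = l ^ (c * a) * q.eval (a : K) - l ^ (c * L) * q.eval (L : K) := by
    intro a ha
    induction a with
    | zero =>
      have : L = 0 := Nat.le_zero.mp ha
      subst this; simp
    | succ a iha =>
      rcases Nat.lt_or_ge a L with h | h
      · have haL : L = a + 1 := le_antisymm ha h
        subst haL; simp
      · rw [Finset.sum_Ico_succ_top h, iha h]
        have step : p.eval (a : K) * l ^ (c * a)
            = l ^ (c * (a+1)) * q.eval ((a : K) + 1) - l ^ (c * a) * q.eval (a : K) := by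
          have := hq (a : K)
          have hpow : l ^ (c * (a + 1)) = l ^ (c * a) * l ^ c := by
            rw [Nat.mul_succ, pow_add]
          rw [hpow]
          calc p.eval (a:K) * l ^ (c*a)
              = l ^ (c*a) * (l ^ c * q.eval ((a:K)+1) - q.eval (a:K)) := by rw [this]; ring
            _ = _ := by ring
        rw [step]
        push_cast
        ring
  -- build Q
  set Q : MvPolynomial (Fin 2) K :=
    ((MvPolynomial.X 1 : MvPolynomial (Fin 2) K) ^ c) *
      (Polynomial.aeval (MvPolynomial.X 0 : MvPolynomial (Fin 2) K) q)
      - MvPolynomial.C (l ^ (c * L) * q.eval (L : K)) with hQ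
  refine ⟨Q, fun a ha => ?_⟩
  rw [tel a ha, hQ]
  simp only [MvPolynomial.eval_sub, MvPolynomial.eval_mul, MvPolynomial.eval_pow,
    MvPolynomial.eval_X, MvPolynomial.eval_C]
  have heval : MvPolynomial.eval ![(a : K), l ^ a] (Polynomial.aeval (MvPolynomial.X 0) q)
      = q.eval (a : K) := by
    have h2 : (MvPolynomial.eval ![(a : K), l ^ a]).comp
        (MvPolynomial.C : K →+* MvPolynomial (Fin 2) K) = RingHom.id K := by
      ext x; simp
    rw [Polynomial.aeval_def, MvPolynomial.algebraMap_eq]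
    rw [Polynomial.hom_eval₂, h2, MvPolynomial.eval_X, Matrix.cons_val_zero]
    rfl
  rw [heval]
  simp only [Matrix.cons_val_one, Matrix.head_cons, Matrix.cons_val_zero]
  rw [show l ^ (c * a) = (l ^ a) ^ c by rw [← pow_mul, Nat.mul_comm]]


theorem my_good_sum {K : Type*} [Field K] (l : K) (hl : ∀ c : ℕ, 1 ≤ c → l ^ c ≠ 1)
    (L : ℕ) (R : MvPolynomial (Fin 2) K) :
    ∀ (p : Polynomial K) (c : ℕ), 1 ≤ c →
    ∃ Q : MvPolynomial (Fin 2) K, ∀ a : ℕ, L ≤ a →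
      (∑ b ∈ Finset.Ico L a,
        MvPolynomial.eval ![(b : K), l ^ b] R * p.eval (b : K) * l ^ (c * b))
      = MvPolynomial.eval ![(a : K), l ^ a] Q := by
  induction R using MvPolynomial.induction_on with
  | C r =>
    intro p c hc
    obtain ⟨Q, hQ⟩ := my_key_sum l hl L (Polynomial.C r * p) c hc
    refine ⟨Q, fun a ha => ?_⟩
    rw [← hQ a ha]
    refine Finset.sum_congr rfl fun b _ => ?_
    simp [mul_assoc]
  | add R S ihR ihS =>
    intro p c hc
    obtain ⟨Q₁, hQ₁⟩ := ihR p c hc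
    obtain ⟨Q₂, hQ₂⟩ := ihS p c hc
    refine ⟨Q₁ + Q₂, fun a ha => ?_⟩
    rw [MvPolynomial.eval_add, ← hQ₁ a ha, ← hQ₂ a ha, ← Finset.sum_add_distrib]
    refine Finset.sum_congr rfl fun b _ => ?_
    rw [MvPolynomial.eval_add]; ring
  | mul_X R i ihR =>
    intro p c hc
    fin_cases i
    · obtain ⟨Q, hQ⟩ := ihR (Polynomial.X * p) c hc
      refine ⟨Q, fun a ha => ?_⟩
      rw [← hQ a ha]
      refine Finset.sum_congr rfl fun b _ => ?_
      simp only [MvPolynomial.eval_mul, MvPolynomial.eval_X, Fin.mk_zero, Matrix.cons_val_zero,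
        Polynomial.eval_mul, Polynomial.eval_X]
      ring
    · obtain ⟨Q, hQ⟩ := ihR p (c + 1) (by omega)
      refine ⟨Q, fun a ha => ?_⟩
      rw [← hQ a ha]
      refine Finset.sum_congr rfl fun b _ => ?_
      simp only [MvPolynomial.eval_mul, MvPolynomial.eval_X, Fin.mk_one, Matrix.cons_val_one,
        Matrix.head_cons, Matrix.cons_val_zero]
      rw [show (c + 1) * b = c * b + b by ring, pow_add]
      ring


noncomputable def myT {K : Type*} [Field K] (g : ℕ → ℕ → K) (L : ℕ) : ℕ → ℕ → K
  | 0, _ => 1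
  | d + 1, a => ∑ b ∈ Finset.Ico L a, myT g L d b * g d b

theorem myT_good {K : Type*} [Field K] (l : K) (hl : ∀ c : ℕ, 1 ≤ c → l ^ c ≠ 1)
    (L : ℕ) (p : ℕ → Polynomial K) (c : ℕ → ℕ) (hc : ∀ j, 1 ≤ c j) (δ : ℕ) :
    ∃ Q : MvPolynomial (Fin 2) K, ∀ a : ℕ, L ≤ a →
      myT (fun j i => (p j).eval (i : K) * l ^ (c j * i)) L δ a
        = MvPolynomial.eval ![(a : K), l ^ a] Q := by
  induction δ with
  | zero => exact ⟨1, fun a _ => by simp [myT]⟩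
  | succ d ih =>
    obtain ⟨R, hR⟩ := ih
    obtain ⟨Q, hQ⟩ := my_good_sum l hl L R (p d) (c d) (hc d)
    refine ⟨Q, fun a ha => ?_⟩
    rw [← hQ a ha]
    show (∑ b ∈ Finset.Ico L a, myT _ L d b * ((p d).eval (b : K) * l ^ (c d * b))) = _
    refine Finset.sum_congr rfl fun b hb => ?_
    rw [hR b (Finset.mem_Ico.mp hb).1, mul_assoc]

theorem myT_eq {K : Type*} [Field K] (g : ℕ → ℕ → K) (L : ℕ) :
    ∀ (δ a : ℕ), myT g L δ a
      = ∑ I ∈ Finset.univ.filter (fun I : Fin δ → Fin a =>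
          (∀ i j : Fin δ, i < j → I i < I j) ∧ ∀ j : Fin δ, L ≤ (I j : ℕ)),
        ∏ j : Fin δ, g (j : ℕ) ((I j : ℕ)) := by
  intro δ
  induction δ with
  | zero =>
    intro a
    rw [Finset.filter_true_of_mem (fun I _ => ⟨fun i => i.elim0, fun j => j.elim0⟩)]
    simp [myT]
  | succ d ih =>
    intro a
    show (∑ b ∈ Finset.Ico L a, myT g L d b * g d b) = _
    -- fiber the RHS over the value of `I (Fin.last d)`
    rw [← Finset.sum_fiberwise_of_maps_to (g := fun I : Fin (d+1) → Fin a => ((I (Fin.last d) : ℕ)))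
      (t := Finset.Ico L a) ?mapsto]
    case mapsto =>
      intro I hI
      rw [Finset.mem_filter] at hI
      exact Finset.mem_Ico.mpr ⟨hI.2.2 _, (I (Fin.last d)).isLt⟩
    refine Finset.sum_congr rfl fun b hb => ?_
    obtain ⟨hLb, hba⟩ := Finset.mem_Ico.mp hb
    rw [ih b, Finset.sum_mul]
    have hbmem : ∀ (I : Fin (d+1) → Fin a), I ∈ (Finset.univ.filter (fun I : Fin (d+1) → Fin a =>
          (∀ i j, i < j → I i < I j) ∧ ∀ j, L ≤ (I j : ℕ))).filter
            (fun I => ((I (Fin.last d) : ℕ)) = b) →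
        (∀ i j, i < j → I i < I j) ∧ (∀ j, L ≤ (I j : ℕ)) ∧ ((I (Fin.last d) : ℕ)) = b := by
      intro I hI
      rw [Finset.mem_filter, Finset.mem_filter] at hI
      exact ⟨hI.1.2.1, hI.1.2.2, hI.2⟩
    refine Finset.sum_bij'
      (i := fun I' _ => Fin.snoc (fun j => (⟨(I' j : ℕ), lt_trans (I' j).isLt hba⟩ : Fin a))
        (⟨b, hba⟩ : Fin a))
      (j := fun I hI => fun j => (⟨(I j.castSucc : ℕ), by
        have h := hbmem I hI
        have := h.1 j.castSucc (Fin.last d) (Fin.castSucc_lt_last j)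
        rw [Fin.lt_def, h.2.2] at this
        exact this⟩ : Fin b))
      ?_ ?_ ?_ ?_ ?_
    · -- i maps into fiber
      intro I' hI'
      obtain ⟨hmono, hL⟩ := (Finset.mem_filter.mp hI').2
      rw [Finset.mem_filter, Finset.mem_filter]
      refine ⟨⟨Finset.mem_univ _, ?_, ?_⟩, ?_⟩
      · intro i j hij
        rcases Fin.eq_castSucc_or_eq_last j with ⟨j', rfl⟩ | rfl
        · obtain ⟨i', rfl⟩ := Fin.exists_castSucc_eq.mpr
            (Fin.ne_last_of_lt (lt_trans hij (Fin.castSucc_lt_last j')))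
          rw [Fin.snoc_castSucc, Fin.snoc_castSucc, Fin.lt_def]
          exact hmono i' j' (by rwa [Fin.castSucc_lt_castSucc_iff] at hij)
        · obtain ⟨i', rfl⟩ := Fin.exists_castSucc_eq.mpr (Fin.ne_last_of_lt hij)
          rw [Fin.snoc_castSucc, Fin.snoc_last, Fin.lt_def]
          exact (I' i').isLt
      · intro j
        refine Fin.lastCases ?_ ?_ j
        · rw [Fin.snoc_last]; exact hLb
        · intro j'; rw [Fin.snoc_castSucc]; exact hL j'
      · rw [Fin.snoc_last]
    · -- j maps into s
      intro I hI
      obtain ⟨hmono, hL, -⟩ := hbmem I hI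
      rw [Finset.mem_filter]
      refine ⟨Finset.mem_univ _, fun i j hij => ?_, fun j => hL _⟩
      rw [Fin.lt_def]
      exact hmono i.castSucc j.castSucc (by rwa [Fin.castSucc_lt_castSucc_iff])
    · -- left inverse
      intro I' hI'
      funext j
      apply Fin.ext
      dsimp only
      simp [Fin.snoc_castSucc]
    · -- right inverse
      intro I hI
      obtain ⟨-, -, hlast⟩ := hbmem I hI
      funext j
      refine Fin.lastCases ?_ ?_ j
      · apply Fin.ext
        dsimp only
        rw [Fin.snoc_last]; exact hlast.symm
      · intro j'
        apply Fin.ext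
        dsimp only
        rw [Fin.snoc_castSucc]
    · -- values
      intro I' hI'
      rw [Fin.prod_univ_castSucc]
      congr 1
      · refine Finset.prod_congr rfl fun j _ => ?_
        rw [Fin.snoc_castSucc, Fin.coe_castSucc]
      · rw [Fin.snoc_last, Fin.val_last]


/-- Sums `∑_{L ≤ I_1 < ⋯ < I_δ ≤ a-1} ∏_j P_j(I_j) λ^{C_j I_j}` depend on `a` as a
polynomial function of `(a, λ^a)`, when `λ` is nonzero and not a root of unity. -/
theorem stmt_2 {K : Type*} [Field K] (l : K) (hl0 : l ≠ 0)
    (hl : ∀ c : ℕ, 1 ≤ c → l ^ c ≠ 1)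
    (δ : ℕ) (hδ : 1 ≤ δ) (L : ℕ)
    (C : Fin δ → ℕ) (hC : ∀ j, 1 ≤ C j) (P : Fin δ → Polynomial K) :
    ∃ Q : MvPolynomial (Fin 2) K, ∀ a : ℕ, L ≤ a →
      (∑ I ∈ Finset.univ.filter (fun I : Fin δ → Fin a =>
          (∀ i j : Fin δ, i < j → I i < I j) ∧ ∀ j : Fin δ, L ≤ (I j : ℕ)),
        ∏ j : Fin δ, Polynomial.eval ((I j : ℕ) : K) (P j) * l ^ (C j * (I j : ℕ)))
      = MvPolynomial.eval ![(a : K), l ^ a] Q := by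
  set p : ℕ → Polynomial K := fun j => if h : j < δ then P ⟨j, h⟩ else 0 with hp
  set c : ℕ → ℕ := fun j => if h : j < δ then C ⟨j, h⟩ else 1 with hc
  have hc1 : ∀ j, 1 ≤ c j := by
    intro j
    rw [hc]
    dsimp only
    split
    · exact hC _
    · exact le_refl 1
  obtain ⟨Q, hQ⟩ := myT_good l hl L p c hc1 δ
  refine ⟨Q, fun a ha => ?_⟩
  rw [← hQ a ha, myT_eq]
  refine Finset.sum_congr rfl fun I _ => Finset.prod_congr rfl fun j _ => ?_
  have hj : (j : ℕ) < δ := j.isLt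
  rw [hp, hc]
  dsimp only
  rw [dif_pos hj, dif_pos hj]
end

section
/- Let d ≥ 1 be an integer, let F = ℚ(T_1, …, T_d) be the field of rational functions in d variables over ℚ (the fraction field of the polynomial ring ℚ[T_1, …, T_d]), and let A_1, …, A_d be polynomials with rational coefficients in one variable. Then there exists a polynomial Q in d+1 variables with coefficients in F such that for every natural number M one has, in F, ∑_{0 ≤ v_1 < v_2 < ⋯ < v_d ≤ M−1} ∏_{i=1}^{d} T_i^{v_i} · A_i(v_i) = Q(M, T_1^M, T_2^M, …, T_d^M), where the sum ranges over all strictly increasing d-tuples of integers v_1, …, v_d lying between 0 and M−1 (the sum being 0 when M = 0 or when there are no such tuples), A_i(v_i) ∈ ℚ ⊂ F is the evaluation of A_i at v_i, and Q(M, T_1^M, …, T_d^M) is the evaluation of Q at the image of M in F and at the M-th powers of the variables. -/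
open Polynomial

set_option linter.unusedSectionVars false
variable {F : Type*} [Field F] [CharZero F]

/-- The map `R ↦ C x * R.comp (X+1) - R` is surjective on `F[X]` (char 0). -/
theorem solve_rec (x : F) : ∀ (n : ℕ) (p : F[X]), p.natDegree ≤ n →
    ∃ R : F[X], C x * R.comp (X + 1) - R = p := by
  intro n
  induction n with
  | zero =>
    intro p hp
    obtain ⟨c, rfl⟩ : ∃ c, p = C c := ⟨_, Polynomial.eq_C_of_natDegree_le_zero hp⟩
    by_cases hx : x = 1
    · subst hx
      refine ⟨C c * X, ?_⟩
      simp only [Polynomial.mul_comp, Polynomial.C_comp, Polynomial.X_comp, map_one, one_mul]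
      ring
    · refine ⟨C (c / (x - 1)), ?_⟩
      simp only [Polynomial.C_comp]
      rw [← Polynomial.C_mul, ← Polynomial.C_sub]
      congr 1
      have h1 : x * (c/(x-1)) - c/(x-1) = (x-1) * (c/(x-1)) := by ring
      rw [h1, mul_div_cancel₀ _ (sub_ne_zero.mpr hx)]
  | succ n ih =>
    intro p hp
    by_cases hdeg : p.natDegree ≤ n
    · exact ih p hdeg
    have hcoeff : ∀ (R₀ : F[X]), (C x * R₀.comp (X+1) - R₀).natDegree ≤ n + 1 →
        (C x * R₀.comp (X+1) - R₀).coeff (n+1) = p.coeff (n+1) →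
        ∃ R : F[X], C x * R.comp (X + 1) - R = p := by
      intro R₀ h1 h2
      have hq : (p - (C x * R₀.comp (X+1) - R₀)).natDegree ≤ n := by
        rw [Polynomial.natDegree_le_iff_coeff_eq_zero]
        intro N hN
        rcases eq_or_lt_of_le (Nat.succ_le_of_lt hN) with h | h
        · simp [← h, h2]
        · rw [Polynomial.coeff_sub]
          rw [Polynomial.coeff_eq_zero_of_natDegree_lt (lt_of_le_of_lt hp h),
            Polynomial.coeff_eq_zero_of_natDegree_lt (lt_of_le_of_lt h1 h), sub_zero]
      obtain ⟨R₁, hR₁⟩ := ih _ hq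
      refine ⟨R₀ + R₁, ?_⟩
      rw [Polynomial.add_comp]
      ring_nf
      ring_nf at hR₁
      linear_combination hR₁
    by_cases hx : x = 1
    · subst hx
      set a := p.coeff (n+1) with ha
      refine hcoeff (C (a / (n+2)) * X^(n+2)) ?_ ?_
      · rw [Polynomial.natDegree_le_iff_coeff_eq_zero]
        intro N hN
        simp only [Polynomial.mul_comp, Polynomial.C_comp, Polynomial.pow_comp,
          Polynomial.X_comp, map_one, one_mul, Polynomial.coeff_sub,
          Polynomial.coeff_C_mul, Polynomial.coeff_X_add_one_pow, Polynomial.coeff_X_pow]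
        rcases eq_or_lt_of_le (Nat.succ_le_of_lt hN) with h | h
        · rw [← h]
          simp
        · rw [Nat.choose_eq_zero_of_lt h, if_neg (by omega)]
          simp
      · simp only [Polynomial.mul_comp, Polynomial.C_comp, Polynomial.pow_comp,
          Polynomial.X_comp, map_one, one_mul, Polynomial.coeff_sub,
          Polynomial.coeff_C_mul, Polynomial.coeff_X_add_one_pow, Polynomial.coeff_X_pow,
          if_neg (by omega : ¬ n + 2 = n + 1)]
        have h2 : ((n:F) + 2) ≠ 0 := by
          have : ((n+2 : ℕ) : F) ≠ 0 := Nat.cast_ne_zero.mpr (by omega)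
          push_cast at this
          exact this
        rw [Nat.choose_succ_self_right]
        push_cast
        field_simp
        rw [if_neg (by omega)]
        ring
    · set a := p.coeff (n+1) with ha
      refine hcoeff (C (a / (x-1)) * X^(n+1)) ?_ ?_
      · rw [Polynomial.natDegree_le_iff_coeff_eq_zero]
        intro N hN
        simp only [Polynomial.mul_comp, Polynomial.C_comp, Polynomial.pow_comp,
          Polynomial.X_comp, Polynomial.coeff_sub, ← mul_assoc, ← Polynomial.C_mul,
          Polynomial.coeff_C_mul, Polynomial.coeff_X_add_one_pow, Polynomial.coeff_X_pow]
        rw [Nat.choose_eq_zero_of_lt hN, if_neg (by omega)]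
        simp
      · simp only [Polynomial.mul_comp, Polynomial.C_comp, Polynomial.pow_comp,
          Polynomial.X_comp, Polynomial.coeff_sub, ← mul_assoc, ← Polynomial.C_mul,
          Polynomial.coeff_C_mul, Polynomial.coeff_X_add_one_pow, Polynomial.coeff_X_pow,
          if_pos rfl, Nat.choose_self]
        have h1 : x - 1 ≠ 0 := sub_ne_zero.mpr hx
        push_cast
        field_simp

theorem geom_sum_poly (x : F) (p : F[X]) : ∃ R : F[X], ∀ M : ℕ,
    ∑ v ∈ Finset.range M, p.eval (v:F) * x^v = R.eval (M:F) * x^M - R.eval 0 := by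
  obtain ⟨R, hR⟩ := solve_rec x p.natDegree p le_rfl
  refine ⟨R, ?_⟩
  have key : ∀ v : ℕ, x * R.eval ((v:F)+1) - R.eval (v:F) = p.eval (v:F) := by
    intro v
    have := congrArg (Polynomial.eval ((v:F))) hR
    simpa [Polynomial.eval_comp] using this
  intro M
  induction M with
  | zero => simp
  | succ M ihM =>
    rw [Finset.sum_range_succ, ihM]
    have := key M
    push_cast
    push_cast at this
    linear_combination (-(x^M)) * this

section Nice
variable {d : ℕ} (t : Fin d → F)

/-- `f : ℕ → F` is "nice" if it is given by a fixed polynomial evaluated at `(M, t₁^M, …, t_d^M)`. -/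
def Nice (f : ℕ → F) : Prop :=
  ∃ Q : MvPolynomial (Fin (d+1)) F, ∀ M : ℕ,
    f M = MvPolynomial.eval (Fin.cons (M : F) (fun i => t i ^ M)) Q

variable {t}

theorem Nice.congr {f g : ℕ → F} (hf : Nice t f) (h : ∀ M, f M = g M) : Nice t g := by
  obtain ⟨Q, hQ⟩ := hf; exact ⟨Q, fun M => (h M) ▸ hQ M⟩

theorem nice_const (c : F) : Nice t (fun _ => c) := ⟨MvPolynomial.C c, by simp⟩

theorem nice_cast : Nice t (fun M => (M : F)) :=
  ⟨MvPolynomial.X 0, by simp⟩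

theorem nice_tpow (i : Fin d) : Nice t (fun M => t i ^ M) :=
  ⟨MvPolynomial.X i.succ, by simp [Fin.cons_succ]⟩

theorem Nice.add {f g : ℕ → F} (hf : Nice t f) (hg : Nice t g) : Nice t (fun M => f M + g M) := by
  obtain ⟨Q₁, h₁⟩ := hf; obtain ⟨Q₂, h₂⟩ := hg
  exact ⟨Q₁ + Q₂, fun M => by simp [h₁ M, h₂ M]⟩

theorem Nice.mul {f g : ℕ → F} (hf : Nice t f) (hg : Nice t g) : Nice t (fun M => f M * g M) := by
  obtain ⟨Q₁, h₁⟩ := hf; obtain ⟨Q₂, h₂⟩ := hg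
  exact ⟨Q₁ * Q₂, fun M => by simp [h₁ M, h₂ M]⟩

theorem Nice.sub {f g : ℕ → F} (hf : Nice t f) (hg : Nice t g) : Nice t (fun M => f M - g M) := by
  obtain ⟨Q₁, h₁⟩ := hf; obtain ⟨Q₂, h₂⟩ := hg
  exact ⟨Q₁ - Q₂, fun M => by simp [h₁ M, h₂ M]⟩

theorem Nice.pow {f : ℕ → F} (hf : Nice t f) (n : ℕ) : Nice t (fun M => f M ^ n) := by
  induction n with
  | zero => exact (nice_const 1).congr (by simp)
  | succ n ih => exact (ih.mul hf).congr (fun M => by rw [pow_succ])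

theorem nice_finsetSum {ι : Type*} (s : Finset ι) (f : ι → ℕ → F)
    (h : ∀ a ∈ s, Nice t (f a)) : Nice t (fun M => ∑ a ∈ s, f a M) := by
  classical
  induction s using Finset.induction_on with
  | empty => exact (nice_const 0).congr (by simp)
  | @insert a s hnot ih =>
    exact ((h a (Finset.mem_insert_self a s)).add
      (ih fun b hb => h b (Finset.mem_insert_of_mem hb))).congr
      (fun M => by rw [Finset.sum_insert hnot])

theorem nice_finsetProd {ι : Type*} (s : Finset ι) (f : ι → ℕ → F)
    (h : ∀ a ∈ s, Nice t (f a)) : Nice t (fun M => ∏ a ∈ s, f a M) := by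
  classical
  induction s using Finset.induction_on with
  | empty => exact (nice_const 1).congr (by simp)
  | @insert a s hnot ih =>
    exact ((h a (Finset.mem_insert_self a s)).mul
      (ih fun b hb => h b (Finset.mem_insert_of_mem hb))).congr
      (fun M => by rw [Finset.prod_insert hnot])

/-- Evaluation of a `ℚ`-polynomial at `M`, cast into `F`, is nice. -/
theorem nice_ratPolyEval (B : Polynomial ℚ) : Nice t (fun M => ((B.eval ((M:ℕ):ℚ) : ℚ) : F)) := by
  have key : ∀ M : ℕ, ((B.eval ((M:ℕ):ℚ) : ℚ) : F)
      = ∑ j ∈ Finset.range (B.natDegree + 1), ((B.coeff j : ℚ) : F) * (M:F)^j := by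
    intro M
    rw [Polynomial.eval_eq_sum_range]
    push_cast
    ring
  refine (nice_finsetSum _ _ (fun j _ => ?_)).congr (fun M => (key M).symm)
  exact (nice_const _).mul (nice_cast.pow j)

/-- The polynomial `R` evaluated at `M` is nice. -/
theorem nice_polyEval (R : F[X]) : Nice t (fun M => R.eval (M:F)) := by
  refine (nice_finsetSum (Finset.range (R.natDegree + 1))
    (fun j M => R.coeff j * (M:F)^j) (fun j _ => (nice_const _).mul (nice_cast.pow j))).congr
    (fun M => (Polynomial.eval_eq_sum_range (M:F)).symm)

end Nice

section NiceSum
variable {d : ℕ} {t : Fin d → F}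

theorem nice_sum_monomial (k : ℕ) (e : Fin d → ℕ) :
    Nice t (fun M => ∑ v ∈ Finset.range M, (v:F)^k * ∏ i : Fin d, t i ^ (e i * v)) := by
  set x : F := ∏ i : Fin d, t i ^ (e i) with hx
  have hxv : ∀ v : ℕ, ∏ i : Fin d, t i ^ (e i * v) = x ^ v := by
    intro v
    rw [hx, ← Finset.prod_pow]
    exact Finset.prod_congr rfl (fun i _ => by rw [← pow_mul])
  obtain ⟨R, hR⟩ := geom_sum_poly x (Polynomial.X ^ k : F[X])
  have hnice : Nice t (fun M => R.eval (M:F) * x^M - R.eval 0) := by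
    refine ((nice_polyEval R).mul ?_).sub (nice_const _)
    have : ∀ M : ℕ, x ^ M = ∏ i : Fin d, (t i ^ M) ^ (e i) := by
      intro M
      rw [hx, ← Finset.prod_pow]
      exact Finset.prod_congr rfl (fun i _ => by rw [← pow_mul, ← pow_mul, Nat.mul_comm])
    exact (nice_finsetProd Finset.univ (fun i M => (t i ^ M) ^ (e i))
      (fun i _ => (nice_tpow i).pow (e i))).congr (fun M => (this M).symm)
  refine hnice.congr (fun M => ?_)
  rw [← hR M]
  exact (Finset.sum_congr rfl (fun v _ => by rw [hxv v]; simp)).symm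

theorem Nice.sumRange {f : ℕ → F} (hf : Nice t f) :
    Nice t (fun M => ∑ v ∈ Finset.range M, f v) := by
  obtain ⟨Q, hQ⟩ := hf
  have expand : ∀ v : ℕ, f v = ∑ m ∈ Q.support,
      MvPolynomial.coeff m Q * ((v:F)^(m 0) * ∏ i : Fin d, t i ^ (m i.succ * v)) := by
    intro v
    rw [hQ v, MvPolynomial.eval_eq']
    refine Finset.sum_congr rfl (fun m _ => ?_)
    rw [Fin.prod_univ_succ]
    simp only [Fin.cons_zero, Fin.cons_succ]
    congr 1
    congr 1
    exact Finset.prod_congr rfl (fun i _ => by rw [← pow_mul, Nat.mul_comm])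
  have swap : ∀ M : ℕ, ∑ v ∈ Finset.range M, f v = ∑ m ∈ Q.support,
      MvPolynomial.coeff m Q *
        ∑ v ∈ Finset.range M, ((v:F)^(m 0) * ∏ i : Fin d, t i ^ (m i.succ * v)) := by
    intro M
    rw [Finset.sum_congr rfl (fun v _ => expand v), Finset.sum_comm]
    exact Finset.sum_congr rfl (fun m _ => by rw [Finset.mul_sum])
  exact (nice_finsetSum Q.support _ (fun m _ =>
    (nice_const _).mul (nice_sum_monomial (m 0) (fun i => m i.succ)))).congr
    (fun M => (swap M).symm)

end NiceSum

section Comb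

theorem sig_ext {k : ℕ} {a b : Σ w : ℕ, Fin k → Fin w} (h1 : a.1 = b.1)
    (h2 : ∀ i : Fin k, ((a.2 i : ℕ)) = ((b.2 i : ℕ))) : a = b := by
  obtain ⟨wa, ua⟩ := a
  obtain ⟨wb, ub⟩ := b
  cases h1
  congr 1
  funext i
  exact Fin.ext (h2 i)

theorem ordsum_succ {α : Type*} [CommRing α] (k M : ℕ) (h : Fin (k+1) → ℕ → α) :
    ∑ v ∈ Finset.univ.filter
        (fun v : Fin (k+1) → Fin M => ∀ i j : Fin (k+1), i < j → v i < v j),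
      ∏ i : Fin (k+1), h i (v i)
    = ∑ w ∈ Finset.range M,
        (∑ u ∈ Finset.univ.filter
            (fun u : Fin k → Fin w => ∀ i j : Fin k, i < j → u i < u j),
          ∏ i : Fin k, h i.castSucc (u i)) * h (Fin.last k) w := by
  classical
  have rhs1 : ∀ w ∈ Finset.range M,
      (∑ u ∈ Finset.univ.filter
          (fun u : Fin k → Fin w => ∀ i j : Fin k, i < j → u i < u j),
        ∏ i : Fin k, h i.castSucc (u i)) * h (Fin.last k) w
      = ∑ u ∈ Finset.univ.filter
          (fun u : Fin k → Fin w => ∀ i j : Fin k, i < j → u i < u j),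
        (∏ i : Fin k, h i.castSucc (u i)) * h (Fin.last k) w := fun w _ =>
    Finset.sum_mul _ _ _
  rw [Finset.sum_congr rfl rhs1, Finset.sum_sigma']
  refine Finset.sum_bij'
    (i := fun v hv => (⟨(v (Fin.last k) : ℕ), fun i =>
      ⟨(v i.castSucc : ℕ), by
        have hp := (Finset.mem_filter.mp hv).2
        exact hp i.castSucc (Fin.last k) (Fin.castSucc_lt_last i)⟩⟩ :
      Σ w : ℕ, Fin k → Fin w))
    (j := fun x hx => Fin.snoc (fun j : Fin k =>
      (⟨(x.2 j : ℕ), lt_trans (x.2 j).isLt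
        (Finset.mem_range.mp (Finset.mem_sigma.mp hx).1)⟩ : Fin M))
      ⟨x.1, Finset.mem_range.mp (Finset.mem_sigma.mp hx).1⟩)
    ?_ ?_ ?_ ?_ ?_
  · -- forward membership
    intro v hv
    have hp := (Finset.mem_filter.mp hv).2
    refine Finset.mem_sigma.mpr ⟨Finset.mem_range.mpr (v (Fin.last k)).isLt, ?_⟩
    refine Finset.mem_filter.mpr ⟨Finset.mem_univ _, ?_⟩
    intro i j hij
    exact hp i.castSucc j.castSucc (Fin.castSucc_lt_castSucc_iff.mpr hij)
  · -- backward membership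
    intro x hx
    refine Finset.mem_filter.mpr ⟨Finset.mem_univ _, ?_⟩
    have hp := (Finset.mem_filter.mp (Finset.mem_sigma.mp hx).2).2
    intro i j hij
    induction j using Fin.lastCases with
    | last =>
      induction i using Fin.lastCases with
      | last => exact absurd hij (lt_irrefl _)
      | cast i =>
        simp only [Fin.snoc_castSucc, Fin.snoc_last]
        exact (x.2 i).isLt
    | cast j =>
      induction i using Fin.lastCases with
      | last => exact absurd (lt_trans hij (Fin.castSucc_lt_last j)) (lt_irrefl _)
      | cast i =>
        simp only [Fin.snoc_castSucc, Fin.snoc_castSucc]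
        exact hp i j (Fin.castSucc_lt_castSucc_iff.mp hij)
  · -- left inverse
    intro v hv
    funext i
    induction i using Fin.lastCases with
    | last => simp only [Fin.snoc_last]
    | cast i => simp only [Fin.snoc_castSucc]
  · -- right inverse
    intro x hx
    refine sig_ext ?_ ?_
    · simp only [Fin.snoc_last]
    · intro i
      simp only [Fin.snoc_castSucc]
  · -- values
    intro v hv
    exact Fin.prod_univ_castSucc _

end Comb

section Main
variable {d : ℕ} {t : Fin d → F}

theorem nice_ordsum : ∀ (k : ℕ) (B : Fin k → Polynomial ℚ) (τ : Fin k → F),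
    (∀ i, Nice t (fun M => τ i ^ M)) →
    Nice t (fun M => ∑ v ∈ Finset.univ.filter
        (fun v : Fin k → Fin M => ∀ i j : Fin k, i < j → v i < v j),
      ∏ i : Fin k, τ i ^ (v i : ℕ) * (((B i).eval ((v i : ℕ) : ℚ) : ℚ) : F)) := by
  intro k
  induction k with
  | zero =>
    intro B τ hτ
    refine (nice_const 1).congr (fun M => ?_)
    rw [Finset.filter_true_of_mem (fun v _ => fun i => i.elim0)]
    simp
  | succ k ih =>
    intro B τ hτ
    have hstep := ih (fun i => B i.castSucc) (fun i => τ i.castSucc)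
      (fun i => hτ i.castSucc)
    have hsummand : Nice t (fun w =>
        (∑ u ∈ Finset.univ.filter
            (fun u : Fin k → Fin w => ∀ i j : Fin k, i < j → u i < u j),
          ∏ i : Fin k, τ i.castSucc ^ (u i : ℕ) *
            (((B i.castSucc).eval ((u i : ℕ) : ℚ) : ℚ) : F)) *
          (τ (Fin.last k) ^ w * (((B (Fin.last k)).eval ((w:ℕ) : ℚ) : ℚ) : F))) :=
      hstep.mul ((hτ (Fin.last k)).mul (nice_ratPolyEval (B (Fin.last k))))
    refine hsummand.sumRange.congr (fun M => ?_)
    exact (ordsum_succ k M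
      (fun i n => τ i ^ n * (((B i).eval ((n:ℕ) : ℚ) : ℚ) : F))).symm

end Main

/-- Lemma 3.3 of the paper: in `F = ℚ(T_1,…,T_d)`, the sums
`∑_{0 ≤ v_1 < ⋯ < v_d ≤ M-1} ∏_i T_i^{v_i} A_i(v_i)` depend on `M` as the evaluation of a
fixed polynomial (with coefficients in `F`) at `(M, T_1^M, …, T_d^M)`. -/
theorem stmt_3 (d : ℕ) (hd : 1 ≤ d) (A : Fin d → Polynomial ℚ) :
    ∃ Q : MvPolynomial (Fin (d + 1)) (FractionRing (MvPolynomial (Fin d) ℚ)),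
      ∀ M : ℕ,
        (∑ v ∈ Finset.univ.filter
            (fun v : Fin d → Fin M => ∀ i j : Fin d, i < j → v i < v j),
          ∏ i : Fin d,
            (algebraMap (MvPolynomial (Fin d) ℚ) (FractionRing (MvPolynomial (Fin d) ℚ))
                (MvPolynomial.X i)) ^ (v i : ℕ) *
              ((Polynomial.eval ((v i : ℕ) : ℚ) (A i) : ℚ) :
                FractionRing (MvPolynomial (Fin d) ℚ)))
        = MvPolynomial.eval
            (Fin.cons ((M : ℕ) : FractionRing (MvPolynomial (Fin d) ℚ))
              (fun i : Fin d =>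
                (algebraMap (MvPolynomial (Fin d) ℚ) (FractionRing (MvPolynomial (Fin d) ℚ))
                    (MvPolynomial.X i)) ^ M)) Q := by
  set F := FractionRing (MvPolynomial (Fin d) ℚ)
  set t : Fin d → F := fun i => algebraMap (MvPolynomial (Fin d) ℚ) F (MvPolynomial.X i) with ht
  obtain ⟨Q, hQ⟩ := nice_ordsum (t := t) d A t (fun i => nice_tpow i)
  exact ⟨Q, fun M => hQ M⟩
end

section
/- Let q ≥ 2, d ≥ 1 and B ≥ 1 be integers. The map sending a d-tuple of triples ((v_i, u_i, r_i))_{1 ≤ i ≤ d} to the d-tuple (q^{v_i}(q u_i + r_i))_{1 ≤ i ≤ d} is a bijection from the set of d-tuples of triples with v_i, u_i natural numbers and 1 ≤ r_i ≤ q − 1 satisfying q^{v_d}(q u_d + r_d) < B and, for each 1 ≤ i ≤ d−1: u_i ≤ q^{v_{i+1}−v_i−1}(q u_{i+1} + r_{i+1}) − 1 if v_i < v_{i+1}; u_i ≤ u_{i+1} if v_i = v_{i+1} and r_i < r_{i+1}; u_i ≤ u_{i+1} − 1 if v_i = v_{i+1} and r_i ≥ r_{i+1}; q^{v_i−v_{i+1}−1}(q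 u_i + r_i) ≤ u_{i+1} if v_i > v_{i+1}; onto the set of strictly increasing d-tuples of integers (m_1, …, m_d) with 0 < m_1 < m_2 < ⋯ < m_d < B. -/
/-- The value `q^v (q u + r)` associated to a triple `(v, u, r)`. -/
def tripleVal (q : ℕ) (x : ℕ × ℕ × ℕ) : ℕ := q ^ x.1 * (q * x.2.1 + x.2.2)

/-- The four-case condition on consecutive triples `x = (v, u, r)` and `y = (v', u', r')`
expressing `tripleVal q x < tripleVal q y`.  (Over the naturals, `u ≤ X - 1` is stated
as `u + 1 ≤ X`.) -/
def consecCond (q : ℕ) (x y : ℕ × ℕ × ℕ) : Prop :=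
  (x.1 < y.1 → x.2.1 + 1 ≤ q ^ (y.1 - x.1 - 1) * (q * y.2.1 + y.2.2)) ∧
  (x.1 = y.1 → x.2.2 < y.2.2 → x.2.1 ≤ y.2.1) ∧
  (x.1 = y.1 → y.2.2 ≤ x.2.2 → x.2.1 + 1 ≤ y.2.1) ∧
  (y.1 < x.1 → q ^ (x.1 - y.1 - 1) * (q * x.2.1 + x.2.2) ≤ y.2.1)

lemma exists_decomp (q : ℕ) (hq : 2 ≤ q) :
    ∀ m : ℕ, 1 ≤ m → ∃ x : ℕ × ℕ × ℕ, 1 ≤ x.2.2 ∧ x.2.2 ≤ q - 1 ∧ tripleVal q x = m := by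
  intro m
  induction m using Nat.strong_induction_on with
  | _ m ih =>
    intro hm
    by_cases hdvd : q ∣ m
    · obtain ⟨m', rfl⟩ := hdvd
      have hm' : 1 ≤ m' := by
        rcases Nat.eq_zero_or_pos m' with h | h
        · subst h; simp at hm
        · exact h
      have hlt : m' < q * m' := by nlinarith
      obtain ⟨⟨v, u, r⟩, h1, h2, h3⟩ := ih m' hlt hm'
      refine ⟨⟨v + 1, u, r⟩, h1, h2, ?_⟩
      simp only [tripleVal] at h3 ⊢
      rw [pow_succ]
      calc q ^ v * q * (q * u + r) = q * (q ^ v * (q * u + r)) := by ring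
        _ = q * m' := by rw [h3]
    · refine ⟨⟨0, m / q, m % q⟩, ?_, ?_, ?_⟩
      · show 1 ≤ m % q
        have : m % q ≠ 0 := fun h => hdvd (Nat.dvd_of_mod_eq_zero h)
        omega
      · show m % q ≤ q - 1
        have := Nat.mod_lt m (show 0 < q by omega); omega
      · simp [tripleVal, Nat.div_add_mod]

lemma decomp_unique (q : ℕ) (hq : 2 ≤ q) :
    ∀ v u r v' u' r' : ℕ, 1 ≤ r → r ≤ q - 1 → 1 ≤ r' → r' ≤ q - 1 →
      q ^ v * (q * u + r) = q ^ v' * (q * u' + r') → v = v' ∧ u = u' ∧ r = r' := by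
  intro v
  induction v with
  | zero =>
    intro u r v' u' r' h1 h2 h3 h4 heq
    match v' with
    | 0 =>
      simp only [pow_zero, one_mul] at heq
      have hr : (q * u + r) % q = r := by
        rw [Nat.mul_add_mod]; exact Nat.mod_eq_of_lt (by omega)
      have hr' : (q * u' + r') % q = r' := by
        rw [Nat.mul_add_mod]; exact Nat.mod_eq_of_lt (by omega)
      have hrr : r = r' := by rw [← hr, ← hr', heq]
      have hu : u = u' := by
        have : q * u = q * u' := by omega
        exact Nat.eq_of_mul_eq_mul_left (by omega) this
      exact ⟨rfl, hu, hrr⟩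
    | v' + 1 =>
      exfalso
      simp only [pow_zero, one_mul, pow_succ] at heq
      have hdvd : q ∣ q * u + r := by
        rw [heq]; exact ⟨q ^ v' * (q * u' + r'), by ring⟩
      have : q ∣ r := (Nat.dvd_add_right ⟨u, rfl⟩).mp hdvd
      have := Nat.le_of_dvd (by omega) this
      omega
  | succ v ih =>
    intro u r v' u' r' h1 h2 h3 h4 heq
    match v' with
    | 0 =>
      exfalso
      simp only [pow_zero, one_mul, pow_succ] at heq
      have hdvd : q ∣ q * u' + r' := by
        rw [← heq]; exact ⟨q ^ v * (q * u + r), by ring⟩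
      have : q ∣ r' := (Nat.dvd_add_right ⟨u', rfl⟩).mp hdvd
      have := Nat.le_of_dvd (by omega) this
      omega
    | v' + 1 =>
      have heq' : q ^ v * (q * u + r) = q ^ v' * (q * u' + r') := by
        apply Nat.eq_of_mul_eq_mul_left (show 0 < q by omega)
        calc q * (q ^ v * (q * u + r)) = q ^ (v + 1) * (q * u + r) := by ring
          _ = q ^ (v' + 1) * (q * u' + r') := heq
          _ = q * (q ^ v' * (q * u' + r')) := by ring
      obtain ⟨hv, hu, hr⟩ := ih u r v' u' r' h1 h2 h3 h4 heq'
      exact ⟨by omega, hu, hr⟩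

lemma consec_iff (q : ℕ) (hq : 2 ≤ q) (x y : ℕ × ℕ × ℕ)
    (hx1 : 1 ≤ x.2.2) (hx2 : x.2.2 ≤ q - 1) (hy1 : 1 ≤ y.2.2) (hy2 : y.2.2 ≤ q - 1) :
    consecCond q x y ↔ tripleVal q x < tripleVal q y := by
  obtain ⟨v, u, r⟩ := x
  obtain ⟨v', u', r'⟩ := y
  simp only [consecCond, tripleVal] at *
  have hrq : r < q := by omega
  have hrq' : r' < q := by omega
  rcases lt_trichotomy v v' with hv | hv | hv
  · -- v < v'
    obtain ⟨k, rfl⟩ : ∃ k, v' = v + k + 1 := ⟨v' - v - 1, by omega⟩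
    rw [show v + k + 1 - v - 1 = k from by omega]
    set M := q ^ k * (q * u' + r') with hMdef
    have hpow : 0 < q ^ v := pow_pos (by omega) v
    have hsplit : q ^ (v + k + 1) * (q * u' + r') = q ^ v * (q * M) := by
      rw [hMdef, pow_succ, pow_add]; ring
    constructor
    · rintro ⟨h1, -, -, -⟩
      have hM := h1 hv
      rw [hsplit]
      apply mul_lt_mul_of_pos_left ?_ hpow
      have h2 : q * (u + 1) ≤ q * M := Nat.mul_le_mul (le_refl q) hM
      have h3 : q * (u + 1) = q * u + q := by ring
      linarith
    · intro hlt
      refine ⟨fun _ => ?_, fun he => absurd he (by omega), fun he => absurd he (by omega),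
        fun h' => absurd h' (by omega)⟩
      rw [hsplit] at hlt
      have h2 : q * u + r < q * M := lt_of_mul_lt_mul_left hlt (Nat.zero_le _)
      have h3 : q * u < q * M := by linarith
      exact Nat.lt_of_mul_lt_mul_left h3
  · -- v = v'
    subst hv
    have hpow : 0 < q ^ v := pow_pos (by omega) v
    constructor
    · rintro ⟨-, h2, h3, -⟩
      apply mul_lt_mul_of_pos_left ?_ hpow
      rcases lt_or_ge r r' with h | h
      · have hu := h2 rfl h
        have := Nat.mul_le_mul (le_refl q) hu
        linarith
      · have hu := h3 rfl h
        have h5 : q * (u + 1) ≤ q * u' := Nat.mul_le_mul (le_refl q) hu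
        have h6 : q * (u + 1) = q * u + q := by ring
        linarith
    · intro hlt
      have h2 : q * u + r < q * u' + r' := lt_of_mul_lt_mul_left hlt (Nat.zero_le _)
      refine ⟨fun h => absurd h (lt_irrefl v), fun _ hr => ?_, fun _ hr => ?_,
        fun h => absurd h (lt_irrefl v)⟩
      · by_contra hcon
        push_neg at hcon
        have h5 : q * (u' + 1) ≤ q * u := Nat.mul_le_mul (le_refl q) hcon
        have h6 : q * (u' + 1) = q * u' + q := by ring
        linarith
      · by_contra hcon
        push_neg at hcon
        have h5 : q * u' ≤ q * u := Nat.mul_le_mul (le_refl q) (by omega)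
        linarith
  · -- v' < v
    obtain ⟨k, rfl⟩ : ∃ k, v = v' + k + 1 := ⟨v - v' - 1, by omega⟩
    rw [show v' + k + 1 - v' - 1 = k from by omega]
    set M := q ^ k * (q * u + r) with hMdef
    have hpow : 0 < q ^ v' := pow_pos (by omega) v'
    have hsplit : q ^ (v' + k + 1) * (q * u + r) = q ^ v' * (q * M) := by
      rw [hMdef, pow_succ, pow_add]; ring
    constructor
    · rintro ⟨-, -, -, h4⟩
      have hM := h4 hv
      rw [hsplit]
      apply mul_lt_mul_of_pos_left ?_ hpow
      have h2 : q * M ≤ q * u' := Nat.mul_le_mul (le_refl q) hM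
      linarith
    · intro hlt
      refine ⟨fun h' => absurd h' (by omega), fun he => absurd he (by omega),
        fun he => absurd he (by omega), fun _ => ?_⟩
      rw [hsplit] at hlt
      have h2 : q * M < q * u' + r' := lt_of_mul_lt_mul_left hlt (Nat.zero_le _)
      have h3 : q * M < q * (u' + 1) := by
        have : q * (u' + 1) = q * u' + q := by ring
        linarith
      have := Nat.lt_of_mul_lt_mul_left h3
      omega

/-- Lemma 3.1 of the paper (change of the domain of summation): the map
`((v_i, u_i, r_i))_i ↦ (q^{v_i} (q u_i + r_i))_i` is a bijection from the set of `d`-tuples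
of triples with `1 ≤ r_i ≤ q - 1`, last value `< B`, and consecutive pairs satisfying the
four-case condition, onto the set of tuples `0 < m_1 < ⋯ < m_d < B`. -/
theorem stmt_6 (q d B : ℕ) (hq : 2 ≤ q) (hd : 1 ≤ d) (hB : 1 ≤ B) :
    Set.BijOn
      (fun (f : Fin d → ℕ × ℕ × ℕ) (i : Fin d) => tripleVal q (f i))
      {f : Fin d → ℕ × ℕ × ℕ |
        (∀ i : Fin d, 1 ≤ (f i).2.2 ∧ (f i).2.2 ≤ q - 1) ∧
        tripleVal q (f ⟨d - 1, by omega⟩) < B ∧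
        (∀ i : Fin d, ∀ h : (i : ℕ) + 1 < d, consecCond q (f i) (f ⟨(i : ℕ) + 1, h⟩))}
      {m : Fin d → ℕ |
        0 < m ⟨0, by omega⟩ ∧
        (∀ i : Fin d, ∀ h : (i : ℕ) + 1 < d, m i < m ⟨(i : ℕ) + 1, h⟩) ∧
        m ⟨d - 1, by omega⟩ < B} := by
  refine ⟨?_, ?_, ?_⟩
  · -- MapsTo
    rintro f ⟨hr, hlast, hcons⟩
    refine ⟨?_, ?_, hlast⟩
    · have h := (hr ⟨0, by omega⟩).1
      show 0 < tripleVal q (f ⟨0, by omega⟩)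
      unfold tripleVal
      exact Nat.mul_pos (pow_pos (by omega) _) (by omega)
    · intro i h
      exact (consec_iff q hq _ _ (hr i).1 (hr i).2 (hr _).1 (hr _).2).mp (hcons i h)
  · -- InjOn
    rintro f ⟨hrf, -, -⟩ g ⟨hrg, -, -⟩ heq
    funext i
    have h := congrFun heq i
    simp only [tripleVal] at h
    have h' := decomp_unique q hq (f i).1 (f i).2.1 (f i).2.2 (g i).1 (g i).2.1 (g i).2.2
      (hrf i).1 (hrf i).2 (hrg i).1 (hrg i).2 h
    exact Prod.ext h'.1 (Prod.ext h'.2.1 h'.2.2)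
  · -- SurjOn
    rintro m ⟨h0, hsteps, hlast⟩
    have hpos : ∀ i : Fin d, 0 < m i := by
      have key : ∀ k, ∀ hk : k < d, 0 < m ⟨k, hk⟩ := by
        intro k
        induction k with
        | zero => intro hk; exact h0
        | succ n ih =>
          intro hk
          have hn : n < d := by omega
          exact lt_trans (ih hn) (hsteps ⟨n, hn⟩ hk)
      intro i
      have := key i.1 i.2
      simpa using this
    choose f h1 h2 h3 using fun i => exists_decomp q hq (m i) (hpos i)
    refine ⟨f, ⟨fun i => ⟨h1 i, h2 i⟩, ?_, ?_⟩, ?_⟩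
    · rw [h3]; exact hlast
    · intro i h
      rw [consec_iff q hq _ _ (h1 i) (h2 i) (h1 _) (h2 _), h3, h3]
      exact hsteps i h
    · funext i; exact h3 i
end
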